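/- arXiv:1906.11558 — 4 statements merged into one kernel-verified Lean document; each statement's English description precedes it below -/
import Mathlib

section
/- Every D-degenerate graph G on n vertices contains an integer d with 0 ≤ d ≤ 2D and an independent set I ⊆ V(G) with |I| ≥ n/(2D+1)^3 such that every vertex of I has degree exactly d in G. -/
attribute [local instance] Classical.propDecidable

lemma ncard_eq_filter {n : ℕ} (G : SimpleGraph (Fin n)) (v : Fin n) (s : Finset (Fin n)) :
    ({w : Fin n | w ∈ s ∧ G.Adj v w}).ncard = (s.filter (G.Adj v)).card := by
  rw [← Set.ncard_coe_finset]
  congr 1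
  ext w
  simp

lemma sum_deg_bound {D n : ℕ} (G : SimpleGraph (Fin n))
    (hdeg : ∀ s : Finset (Fin n), s.Nonempty →
      ∃ v ∈ s, (s.filter (G.Adj v)).card ≤ D) :
    ∀ s : Finset (Fin n), ∑ v ∈ s, (s.filter (G.Adj v)).card ≤ 2 * D * s.card := by
  suffices H : ∀ m (s : Finset (Fin n)), s.card = m →
      ∑ v ∈ s, (s.filter (G.Adj v)).card ≤ 2 * D * s.card by
    intro s; exact H s.card s rfl
  intro m
  induction m using Nat.strong_induction_on with
  | _ m ih =>
  intro s hm
  rcases s.eq_empty_or_nonempty with rfl | hne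
  · simp
  obtain ⟨v, hv, hvD⟩ := hdeg s hne
  set t := s.erase v with ht
  have htc : t.card = s.card - 1 := Finset.card_erase_of_mem hv
  have hpos : 0 < s.card := Finset.card_pos.mpr hne
  have hst : s = insert v t := (Finset.insert_erase hv).symm
  have hvt : v ∉ t := Finset.notMem_erase v s
  have hsum : ∑ w ∈ s, (s.filter (G.Adj w)).card
      = (s.filter (G.Adj v)).card + ∑ w ∈ t, (s.filter (G.Adj w)).card := by
    exact (Finset.add_sum_erase s _ hv).symm
  have hterm : ∀ w ∈ t, (s.filter (G.Adj w)).card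
      = (t.filter (G.Adj w)).card + (if G.Adj w v then 1 else 0) := by
    intro w hw
    by_cases h : G.Adj w v
    · rw [if_pos h]
      conv_lhs => rw [hst, Finset.filter_insert, if_pos h,
        Finset.card_insert_of_notMem (fun hc => hvt (Finset.mem_of_mem_filter v hc))]
    · rw [if_neg h]
      conv_lhs => rw [hst, Finset.filter_insert, if_neg h]
      omega
  have hboole : ∑ w ∈ t, (if G.Adj w v then 1 else 0)
      = (t.filter (fun w => G.Adj w v)).card := by
    simp [Finset.sum_boole]
  have hsum2 : ∑ w ∈ t, (s.filter (G.Adj w)).card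
      = ∑ w ∈ t, (t.filter (G.Adj w)).card + (t.filter (fun w => G.Adj w v)).card := by
    rw [Finset.sum_congr rfl hterm, Finset.sum_add_distrib, hboole]
  -- the back-neighbor count equals the forward one
  have hback : (t.filter (fun w => G.Adj w v)).card ≤ (s.filter (G.Adj v)).card := by
    apply Finset.card_le_card
    intro w hw
    simp only [Finset.mem_filter] at hw ⊢
    exact ⟨Finset.mem_of_mem_erase hw.1, hw.2.symm⟩
  have hIH : ∑ w ∈ t, (t.filter (G.Adj w)).card ≤ 2 * D * t.card :=
    ih t.card (by omega) t rfl
  calc ∑ w ∈ s, (s.filter (G.Adj w)).card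
      = (s.filter (G.Adj v)).card + (∑ w ∈ t, (t.filter (G.Adj w)).card
        + (t.filter (fun w => G.Adj w v)).card) := by rw [hsum, hsum2]
    _ ≤ D + (2 * D * t.card + D) := by
        gcongr
        exact le_trans hback hvD
    _ ≤ 2 * D * s.card := by
        have hc : s.card = t.card + 1 := by omega
        rw [hc]; nlinarith



lemma greedy_indep {D n : ℕ} (G : SimpleGraph (Fin n))
    (hdeg : ∀ s : Finset (Fin n), s.Nonempty →
      ∃ v ∈ s, (s.filter (G.Adj v)).card ≤ D) :
    ∀ s : Finset (Fin n), ∃ I ⊆ s, (∀ v ∈ I, ∀ w ∈ I, ¬ G.Adj v w) ∧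
      s.card ≤ (D + 1) * I.card := by
  suffices H : ∀ m (s : Finset (Fin n)), s.card = m →
      ∃ I ⊆ s, (∀ v ∈ I, ∀ w ∈ I, ¬ G.Adj v w) ∧ s.card ≤ (D + 1) * I.card by
    intro s; exact H s.card s rfl
  intro m
  induction m using Nat.strong_induction_on with
  | _ m ih =>
  intro s hm
  rcases s.eq_empty_or_nonempty with rfl | hne
  · exact ⟨∅, Finset.Subset.refl _, by simp, by simp⟩
  obtain ⟨v, hv, hvD⟩ := hdeg s hne
  set s' := (s.erase v) \ (s.filter (G.Adj v)) with hs'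
  have hs'sub : s' ⊆ s := fun x hx =>
    Finset.mem_of_mem_erase (Finset.mem_sdiff.mp hx).1
  have hcard : s.card ≤ s'.card + (D + 1) := by
    have h1 : (s.erase v).card ≤ s'.card + (s.filter (G.Adj v)).card :=
      Finset.card_le_card_sdiff_add_card
    have h2 : (s.erase v).card = s.card - 1 := Finset.card_erase_of_mem hv
    have h3 : 0 < s.card := Finset.card_pos.mpr hne
    omega
  have hlt : s'.card < m := by
    have : s'.card ≤ (s.erase v).card := Finset.card_le_card (Finset.sdiff_subset)
    have h2 : (s.erase v).card = s.card - 1 := Finset.card_erase_of_mem hv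
    have h3 : 0 < s.card := Finset.card_pos.mpr hne
    omega
  obtain ⟨I', hI'sub, hI'ind, hI'card⟩ := ih s'.card hlt s' rfl
  have hvI' : v ∉ I' := fun h => by
    have := hI'sub h
    exact Finset.notMem_erase v s (Finset.mem_sdiff.mp this).1
  refine ⟨insert v I', ?_, ?_, ?_⟩
  · intro x hx
    rcases Finset.mem_insert.mp hx with rfl | hx
    · exact hv
    · exact hs'sub (hI'sub hx)
  · have hvnot : ∀ w ∈ I', ¬ G.Adj v w := fun w hw hadj =>
      (Finset.mem_sdiff.mp (hI'sub hw)).2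
        (Finset.mem_filter.mpr ⟨hs'sub (hI'sub hw), hadj⟩)
    intro x hx y hy hadj
    rcases Finset.mem_insert.mp hx with hx' | hx' <;>
      rcases Finset.mem_insert.mp hy with hy' | hy'
    · subst hx'; subst hy'; exact G.loopless.irrefl _ hadj
    · subst hx'; exact hvnot y hy' hadj
    · subst hy'; exact hvnot x hx' hadj.symm
    · exact hI'ind x hx' y hy' hadj
  · rw [Finset.card_insert_of_notMem hvI']
    have : (D + 1) * (I'.card + 1) = (D + 1) * I'.card + (D + 1) := by ring
    omega

theorem degenerate_large_independent_same_degree' (D n : ℕ) (G : SimpleGraph (Fin n))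
    (hdeg' : ∀ s : Finset (Fin n), s.Nonempty →
      ∃ v ∈ s, (s.filter (G.Adj v)).card ≤ D)
    (sumbd : ∀ s : Finset (Fin n), ∑ v ∈ s, (s.filter (G.Adj v)).card ≤ 2 * D * s.card)
    (greedy : ∀ s : Finset (Fin n), ∃ I ⊆ s, (∀ v ∈ I, ∀ w ∈ I, ¬ G.Adj v w) ∧
      s.card ≤ (D + 1) * I.card) :
    ∃ d ≤ 2 * D, ∃ I : Finset (Fin n),
      (n : ℝ) / (2 * (D : ℝ) + 1) ^ 3 ≤ (I.card : ℝ) ∧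
      (∀ v ∈ I, ∀ w ∈ I, ¬ G.Adj v w) ∧
      (∀ v ∈ I, (G.neighborSet v).ncard = d) := by
  classical
  set deg : Fin n → ℕ := fun v => (Finset.univ.filter (G.Adj v)).card with hdegdef
  have hdegn : ∀ v, (G.neighborSet v).ncard = deg v := by
    intro v
    show (G.neighborSet v).ncard = (Finset.univ.filter (G.Adj v)).card
    rw [← ncard_eq_filter G v Finset.univ]
    congr 1
    ext w
    simp [SimpleGraph.neighborSet]
  have htot : ∑ v : Fin n, deg v ≤ 2 * D * n := by
    have := sumbd Finset.univ
    simpa using this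
  set P : Fin n → Prop := fun v => deg v ≤ 2 * D with hP
  set T := Finset.univ.filter P with hT
  -- |T| ≥ n/(2D+1)
  have hTn : n ≤ (2 * D + 1) * T.card := by
    set T' := Finset.univ.filter (fun v => ¬ P v) with hT'
    have hcards : T.card + T'.card = n := by
      rw [hT, hT', Finset.card_filter_add_card_filter_not]
      simp
    have hlow : T'.card * (2 * D + 1) ≤ ∑ v ∈ T', deg v := by
      have h := Finset.card_nsmul_le_sum T' deg (2 * D + 1) ?_
      · simpa [smul_eq_mul] using h
      · intro x hx
        rw [hT', Finset.mem_filter] at hx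
        have := hx.2
        simp only [hP, not_le] at this
        omega
    have hsum : ∑ v ∈ T, deg v + ∑ v ∈ T', deg v = ∑ v : Fin n, deg v :=
      Finset.sum_filter_add_sum_filter_not Finset.univ P deg
    have htot2 : ∑ v : Fin n, deg v ≤ 2 * D * (T.card + T'.card) := by
      rw [hcards]; exact htot
    have h5 : T'.card ≤ 2 * D * T.card := by
      generalize hA : T.card = A at *
      generalize hB : T'.card = B at *
      generalize hE : ∑ v ∈ T', deg v = E at *
      generalize hF : ∑ v ∈ T, deg v = F at *
      generalize hC : ∑ v : Fin n, deg v = C at *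
      nlinarith [hlow, hsum, htot2]
    calc n = T.card + T'.card := hcards.symm
      _ ≤ T.card + 2 * D * T.card := by omega
      _ = (2 * D + 1) * T.card := by ring
  -- pigeonhole on degree values
  have hfib : T.card = ∑ d ∈ Finset.range (2 * D + 1), (T.filter (fun v => deg v = d)).card := by
    apply Finset.card_eq_sum_card_fiberwise
    intro v hv
    rw [Finset.mem_coe, Finset.mem_filter] at hv
    have := hv.2
    simp only [hP] at this
    rw [Finset.mem_coe, Finset.mem_range]
    omega
  have hpig : ∃ d ∈ Finset.range (2 * D + 1),
      T.card ≤ (2 * D + 1) * (T.filter (fun v => deg v = d)).card := by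
    by_contra hcon
    push_neg at hcon
    have hlt : ∀ d ∈ Finset.range (2 * D + 1),
        (2 * D + 1) * (T.filter (fun v => deg v = d)).card < T.card := hcon
    have : (2 * D + 1) * T.card < (2 * D + 1) * T.card := by
      calc (2 * D + 1) * T.card
          = ∑ d ∈ Finset.range (2 * D + 1), (2 * D + 1) * (T.filter (fun v => deg v = d)).card := by
            rw [← Finset.mul_sum, ← hfib]
        _ < ∑ _d ∈ Finset.range (2 * D + 1), T.card :=
            Finset.sum_lt_sum_of_nonempty (by simp) hlt
        _ = (2 * D + 1) * T.card := by
            rw [Finset.sum_const, Finset.card_range, smul_eq_mul]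
    omega
  obtain ⟨d, hdmem, hdbig⟩ := hpig
  have hdle : d ≤ 2 * D := by rw [Finset.mem_range] at hdmem; omega
  set S := T.filter (fun v => deg v = d) with hS
  obtain ⟨I, hIS, hIind, hIcard⟩ := greedy S
  refine ⟨d, hdle, I, ?_, hIind, ?_⟩
  · -- size bound
    have hchain : n ≤ (2 * D + 1) ^ 3 * I.card := by
      have h1 : n ≤ (2 * D + 1) * ((2 * D + 1) * ((D + 1) * I.card)) := by
        calc n ≤ (2 * D + 1) * T.card := hTn
          _ ≤ (2 * D + 1) * ((2 * D + 1) * S.card) := by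
              apply Nat.mul_le_mul_left
              exact hdbig
          _ ≤ (2 * D + 1) * ((2 * D + 1) * ((D + 1) * I.card)) := by
              apply Nat.mul_le_mul_left
              apply Nat.mul_le_mul_left
              exact hIcard
      calc n ≤ (2 * D + 1) * ((2 * D + 1) * ((D + 1) * I.card)) := h1
        _ ≤ (2 * D + 1) ^ 3 * I.card := by ring_nf; nlinarith
    rw [div_le_iff₀ (by positivity)]
    have : (2 * (D : ℝ) + 1) ^ 3 = (((2 * D + 1) ^ 3 : ℕ) : ℝ) := by push_cast; ring
    rw [this, ← Nat.cast_mul]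
    exact_mod_cast le_trans hchain (by nlinarith [Nat.le_refl (I.card)])
  · intro v hv
    have hvS := hIS hv
    rw [hS, Finset.mem_filter] at hvS
    rw [hdegn v]
    exact hvS.2

/-- Every `D`-degenerate graph on `n` vertices contains an integer `0 ≤ d ≤ 2D` and an
independent set `I` of size at least `n / (2D+1)³` all of whose vertices have degree
exactly `d`.  `D`-degeneracy is expressed as: every (induced) subgraph has a vertex of
degree at most `D` within it. -/
theorem degenerate_large_independent_same_degree (D n : ℕ) (G : SimpleGraph (Fin n))
    (hdeg : ∀ s : Finset (Fin n), s.Nonempty →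
      ∃ v ∈ s, ({w : Fin n | w ∈ s ∧ G.Adj v w}).ncard ≤ D) :
    ∃ d ≤ 2 * D, ∃ I : Finset (Fin n),
      (n : ℝ) / (2 * (D : ℝ) + 1) ^ 3 ≤ (I.card : ℝ) ∧
      (∀ v ∈ I, ∀ w ∈ I, ¬ G.Adj v w) ∧
      (∀ v ∈ I, (G.neighborSet v).ncard = d) := by
  have hdeg' : ∀ s : Finset (Fin n), s.Nonempty →
      ∃ v ∈ s, (s.filter (G.Adj v)).card ≤ D := by
    intro s hs
    obtain ⟨v, hv, h⟩ := hdeg s hs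
    exact ⟨v, hv, by rwa [ncard_eq_filter] at h⟩
  exact degenerate_large_independent_same_degree' D n G hdeg'
    (sum_deg_bound G hdeg') (greedy_indep G hdeg')
end

section
/- Every D-degenerate graph G on n vertices admits an ordering v_1,...,v_n of its vertices that is 2D-degenerate (each vertex has at most 2D neighbours preceding it in the order) such that the last ⌈n/(2D+1)^3⌉ vertices in the order form an independent set and all have the same degree d in G for some 0 ≤ d ≤ 2D. -/
open Finset

section aux
variable {n : ℕ} (G : SimpleGraph (Fin n)) [DecidableRel G.Adj] (D : ℕ)

lemma sumdeg (hdeg : ∀ s : Finset (Fin n), s.Nonempty → ∃ v ∈ s, (s.filter (G.Adj v)).card ≤ D) :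
    ∀ s : Finset (Fin n), ∑ v ∈ s, (s.filter (G.Adj v)).card ≤ 2 * D * s.card := by
  intro s
  induction s using Finset.strongInduction with
  | _ s ih =>
    rcases s.eq_empty_or_nonempty with rfl | hs
    · simp
    obtain ⟨v, hv, hvD⟩ := hdeg s hs
    have key : ∀ u ∈ s.erase v,
        (s.filter (G.Adj u)).card = ((s.erase v).filter (G.Adj u)).card
          + if G.Adj u v then 1 else 0 := by
      intro u hu
      rw [Finset.filter_erase]
      by_cases h : G.Adj u v
      · rw [if_pos h, Finset.card_erase_of_mem (Finset.mem_filter.mpr ⟨hv, h⟩)]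
        have : 0 < (s.filter (G.Adj u)).card :=
          Finset.card_pos.mpr ⟨v, Finset.mem_filter.mpr ⟨hv, h⟩⟩
        omega
      · rw [if_neg h, Finset.erase_eq_of_notMem (fun hc => h (Finset.mem_filter.mp hc).2),
          add_zero]
    have hsum : ∑ u ∈ s.erase v, (s.filter (G.Adj u)).card
        = ∑ u ∈ s.erase v, ((s.erase v).filter (G.Adj u)).card
          + ((s.erase v).filter (fun u => G.Adj u v)).card := by
      rw [Finset.sum_congr rfl key, Finset.sum_add_distrib]
      congr 1
      rw [Finset.card_filter]
    have hvv : ((s.erase v).filter (fun u => G.Adj u v)).card = (s.filter (G.Adj v)).card := by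
      congr 1
      ext u
      simp only [Finset.mem_filter, Finset.mem_erase]
      constructor
      · rintro ⟨⟨_, hu⟩, ha⟩; exact ⟨hu, ha.symm⟩
      · rintro ⟨hu, ha⟩; exact ⟨⟨ha.ne', hu⟩, ha.symm⟩
    have hIH := ih (s.erase v) (Finset.erase_ssubset hv)
    have h2 : ∑ u ∈ s, (s.filter (G.Adj u)).card
        = (s.filter (G.Adj v)).card + ∑ u ∈ s.erase v, (s.filter (G.Adj u)).card :=
      (Finset.add_sum_erase s _ hv).symm
    have hcard : (s.erase v).card + 1 = s.card := by
      rw [Finset.card_erase_of_mem hv]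
      have := Finset.card_pos.mpr hs
      omega
    calc ∑ u ∈ s, (s.filter (G.Adj u)).card
        = (s.filter (G.Adj v)).card + (∑ u ∈ s.erase v, ((s.erase v).filter (G.Adj u)).card
            + (s.filter (G.Adj v)).card) := by rw [h2, hsum, hvv]
      _ ≤ D + (2 * D * (s.erase v).card + D) := by omega
      _ = 2 * D * ((s.erase v).card + 1) := by ring
      _ = 2 * D * s.card := by rw [hcard]

lemma indepaux (hdeg : ∀ s : Finset (Fin n), s.Nonempty → ∃ v ∈ s, (s.filter (G.Adj v)).card ≤ D) :
    ∀ s : Finset (Fin n), ∃ I ⊆ s, (∀ a ∈ I, ∀ b ∈ I, ¬ G.Adj a b) ∧ s.card ≤ (D + 1) * I.card := by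
  intro s
  induction s using Finset.strongInduction with
  | _ s ih =>
    rcases s.eq_empty_or_nonempty with rfl | hs
    · exact ⟨∅, Finset.Subset.refl _, by simp, by simp⟩
    obtain ⟨v, hv, hvD⟩ := hdeg s hs
    set t := s \ insert v (s.filter (G.Adj v)) with ht
    have hvt : v ∉ t := by simp [ht]
    have hts : t ⊂ s := Finset.ssubset_iff_of_subset (Finset.sdiff_subset) |>.mpr
      ⟨v, hv, hvt⟩
    obtain ⟨I, hIsub, hIind, hIcard⟩ := ih t hts
    have hvI : v ∉ I := fun h => hvt (hIsub h)
    refine ⟨insert v I, ?_, ?_, ?_⟩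
    · intro a ha
      rcases Finset.mem_insert.mp ha with rfl | ha
      · exact hv
      · exact (Finset.sdiff_subset) (hIsub ha)
    · have hnadj : ∀ b ∈ I, ¬ G.Adj v b := by
        intro b hb hadj
        have hbt := hIsub hb
        rw [ht, Finset.mem_sdiff] at hbt
        exact hbt.2 (Finset.mem_insert.mpr (Or.inr (Finset.mem_filter.mpr ⟨hbt.1, hadj⟩)))
      intro a ha b hb
      rcases Finset.mem_insert.mp ha with rfl | ha
      · rcases Finset.mem_insert.mp hb with rfl | hb
        · exact G.irrefl
        · exact hnadj b hb
      · rcases Finset.mem_insert.mp hb with hbv | hb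
        · intro hadj; rw [hbv] at hadj; exact hnadj a ha hadj.symm
        · exact hIind a ha b hb
    · have h1 : s.card ≤ t.card + (D + 1) := by
        have hsd := Finset.card_le_card_sdiff_add_card (s := s) (t := insert v (s.filter (G.Adj v)))
        rw [← ht] at hsd
        have h2 : (insert v (s.filter (G.Adj v))).card ≤ D + 1 := by
          have := Finset.card_insert_le v (s.filter (G.Adj v))
          omega
        omega
      rw [Finset.card_insert_of_notMem hvI]
      have : (D+1) * (I.card + 1) = (D+1) * I.card + (D+1) := by ring
      omega

noncomputable def degList
    (h : ∀ s : Finset (Fin n), s.Nonempty → ∃ v ∈ s, (s.filter (G.Adj v)).card ≤ D)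
    (s : Finset (Fin n)) : List (Fin n) :=
  if hs : s.Nonempty then
    degList h (s.erase (h s hs).choose) ++ [(h s hs).choose]
  else []
termination_by s.card
decreasing_by exact Finset.card_erase_lt_of_mem (h s hs).choose_spec.1

variable {G D}
variable (h : ∀ s : Finset (Fin n), s.Nonempty → ∃ v ∈ s, (s.filter (G.Adj v)).card ≤ D)

lemma degList_mem : ∀ s : Finset (Fin n), ∀ w ∈ degList G D h s, w ∈ s := by
  intro s
  induction s using Finset.strongInduction with
  | _ s ih =>
    intro w hw
    rw [degList] at hw
    split at hw
    · rename_i hs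
      rcases List.mem_append.mp hw with hw | hw
      · exact Finset.erase_subset _ _ (ih _ (Finset.erase_ssubset (h s hs).choose_spec.1) w hw)
      · simpa using List.mem_singleton.mp hw ▸ (h s hs).choose_spec.1
    · simp at hw

lemma degList_length : ∀ s : Finset (Fin n), (degList G D h s).length = s.card := by
  intro s
  induction s using Finset.strongInduction with
  | _ s ih =>
    rw [degList]
    split
    · rename_i hs
      have hmem := (h s hs).choose_spec.1
      rw [List.length_append, ih _ (Finset.erase_ssubset hmem),
        Finset.card_erase_of_mem hmem, List.length_singleton]
      have := Finset.card_pos.mpr hs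
      omega
    · rename_i hs
      rw [Finset.not_nonempty_iff_eq_empty.mp hs]
      simp

lemma degList_nodup : ∀ s : Finset (Fin n), (degList G D h s).Nodup := by
  intro s
  induction s using Finset.strongInduction with
  | _ s ih =>
    rw [degList]
    split
    · rename_i hs
      have hmem := (h s hs).choose_spec.1
      refine List.Nodup.append (ih _ (Finset.erase_ssubset hmem)) (List.nodup_singleton _) ?_
      intro a ha hb
      rw [List.mem_singleton] at hb
      exact (Finset.notMem_erase _ _) (hb ▸ degList_mem h _ a ha)
    · exact List.nodup_nil

lemma degList_deg : ∀ s : Finset (Fin n), ∀ i, ∀ hi : i < (degList G D h s).length,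
    {w | w ∈ (degList G D h s).take i ∧ G.Adj ((degList G D h s).get ⟨i, hi⟩) w}.ncard ≤ D := by
  intro s
  induction s using Finset.strongInduction with
  | _ s ih =>
    intro i
    by_cases hs : s.Nonempty
    · have hmem := (h s hs).choose_spec.1
      set v := (h s hs).choose with hvdef
      set M := degList G D h (s.erase v) with hM
      have hEq : degList G D h s = M ++ [v] := by rw [degList, dif_pos hs]
      rw [hEq]
      intro hi
      simp only [List.length_append, List.length_singleton] at hi
      by_cases hiM : i < M.length
      · have hget : (M ++ [v]).get ⟨i, by simp; omega⟩ = M.get ⟨i, hiM⟩ := by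
          simp [List.getElem_append_left hiM]
        have htake : (M ++ [v]).take i = M.take i := by
          rw [List.take_append_of_le_length (le_of_lt hiM)]
        rw [hget, htake]
        exact ih _ (Finset.erase_ssubset hmem) i hiM
      · have hieq : i = M.length := by omega
        subst hieq
        have hget : (M ++ [v]).get ⟨M.length, by simp⟩ = v := by
          simp
        have htake : (M ++ [v]).take M.length = M := List.take_left
        rw [hget, htake]
        have hsub : {w | w ∈ M ∧ G.Adj v w} ⊆ ↑(s.filter (G.Adj v)) := by
          intro w hw
          simp only [Finset.coe_filter, Set.mem_setOf_eq]
          exact ⟨Finset.erase_subset _ _ (degList_mem h _ w hw.1), hw.2⟩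
        calc {w | w ∈ M ∧ G.Adj v w}.ncard ≤ (↑(s.filter (G.Adj v)) : Set (Fin n)).ncard :=
              Set.ncard_le_ncard hsub (Set.toFinite _)
          _ = (s.filter (G.Adj v)).card := Set.ncard_coe_finset _
          _ ≤ D := (h s hs).choose_spec.2
    · have hEq : degList G D h s = [] := by rw [degList, dif_neg hs]
      rw [hEq]
      intro hi
      simp at hi

end aux

/-- Every `D`-degenerate graph on `n` vertices has a `2D`-degenerate ordering
(each vertex has at most `2D` neighbours preceding it) in which the last
`⌈n / (2D+1)³⌉` vertices form an independent set and all have the same degree `d ≤ 2D`.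
The ordering is given by an equiv `e : Fin n ≃ Fin n`, with `e i` the `i`-th vertex. -/
theorem degenerate_reorder (D n : ℕ) (G : SimpleGraph (Fin n))
    (hdeg : ∀ s : Finset (Fin n), s.Nonempty →
      ∃ v ∈ s, ({w : Fin n | w ∈ s ∧ G.Adj v w}).ncard ≤ D) :
    ∃ d ≤ 2 * D, ∃ e : Fin n ≃ Fin n,
      (∀ i : Fin n, ({j : Fin n | j < i ∧ G.Adj (e j) (e i)}).ncard ≤ 2 * D) ∧
      (∀ i : Fin n, n - ⌈(n : ℝ) / (2 * (D : ℝ) + 1) ^ 3⌉₊ ≤ (i : ℕ) →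
        (G.neighborSet (e i)).ncard = d) ∧
      (∀ i j : Fin n, n - ⌈(n : ℝ) / (2 * (D : ℝ) + 1) ^ 3⌉₊ ≤ (i : ℕ) →
        n - ⌈(n : ℝ) / (2 * (D : ℝ) + 1) ^ 3⌉₊ ≤ (j : ℕ) → ¬ G.Adj (e i) (e j)) := by
  classical
  have hdeg' : ∀ s : Finset (Fin n), s.Nonempty → ∃ v ∈ s, (s.filter (G.Adj v)).card ≤ D := by
    intro s hs
    obtain ⟨v, hv, hc⟩ := hdeg s hs
    refine ⟨v, hv, ?_⟩
    have hset : {w : Fin n | w ∈ s ∧ G.Adj v w} = ↑(s.filter (G.Adj v)) := by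
      ext w; simp
    rwa [hset, Set.ncard_coe_finset] at hc
  set k := ⌈(n : ℝ) / (2 * (D : ℝ) + 1) ^ 3⌉₊ with hk
  set A := Finset.univ.filter (fun v : Fin n => (Finset.univ.filter (G.Adj v)).card ≤ 2*D) with hA
  have hAcard : n ≤ (2*D+1) * A.card := by
    have hsum := sumdeg G D hdeg' Finset.univ
    rw [Finset.card_univ, Fintype.card_fin] at hsum
    have hsplit : (Finset.univ \ A).card * (2*D+1)
        ≤ ∑ v ∈ Finset.univ, (Finset.univ.filter (G.Adj v)).card := by
      calc (Finset.univ \ A).card * (2*D+1) = ∑ _v ∈ Finset.univ \ A, (2*D+1) := by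
            rw [Finset.sum_const, smul_eq_mul]
        _ ≤ ∑ v ∈ Finset.univ \ A, (Finset.univ.filter (G.Adj v)).card := by
            apply Finset.sum_le_sum
            intro v hv
            rw [Finset.mem_sdiff, hA, Finset.mem_filter] at hv
            have := hv.2
            simp only [Finset.mem_univ, true_and] at this
            omega
        _ ≤ _ := Finset.sum_le_sum_of_subset (Finset.sdiff_subset)
    have hsd : (Finset.univ \ A).card = n - A.card := by
      rw [Finset.card_sdiff_of_subset (Finset.subset_univ _), Finset.card_univ, Fintype.card_fin]
    rw [hsd] at hsplit
    have h1 : (n - A.card) * (2*D+1) ≤ 2*D*n := le_trans hsplit hsum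
    have e0 : (n - A.card) * (2*D+1) = n*(2*D+1) - A.card*(2*D+1) := Nat.sub_mul _ _ _
    have e1 : n*(2*D+1) = 2*D*n + n := by ring
    have e2 : (2*D+1)*A.card = A.card*(2*D+1) := by ring
    omega
  have hmapsto : ∀ v ∈ A, (Finset.univ.filter (G.Adj v)).card ∈ Finset.range (2*D+1) := by
    intro v hv
    rw [hA, Finset.mem_filter] at hv
    rw [Finset.mem_range]
    omega
  obtain ⟨d, hd, hdmax⟩ := Finset.exists_max_image (Finset.range (2*D+1))
    (fun d => (A.filter (fun v => (Finset.univ.filter (G.Adj v)).card = d)).card)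
    ⟨0, Finset.mem_range.mpr (by omega)⟩
  set B := A.filter (fun v => (Finset.univ.filter (G.Adj v)).card = d) with hB
  have hd2D : d ≤ 2*D := by
    have := Finset.mem_range.mp hd
    omega
  have hAB : A.card ≤ (2*D+1) * B.card := by
    rw [Finset.card_eq_sum_card_fiberwise hmapsto]
    calc ∑ x ∈ Finset.range (2*D+1),
          (A.filter (fun v => (Finset.univ.filter (G.Adj v)).card = x)).card
        ≤ (Finset.range (2*D+1)).card • B.card :=
          Finset.sum_le_card_nsmul _ _ _ (fun x hx => hdmax x hx)
      _ = (2*D+1) * B.card := by rw [Finset.card_range, smul_eq_mul]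
  obtain ⟨I, hIB, hIind, hIcard⟩ := indepaux G D hdeg' B
  have hIcard' : n ≤ (2*D+1)^3 * I.card := by
    calc n ≤ (2*D+1) * A.card := hAcard
      _ ≤ (2*D+1) * ((2*D+1) * B.card) := Nat.mul_le_mul_left _ hAB
      _ ≤ (2*D+1) * ((2*D+1) * ((D+1) * I.card)) := by
          exact Nat.mul_le_mul_left _ (Nat.mul_le_mul_left _ hIcard)
      _ ≤ (2*D+1) * ((2*D+1) * ((2*D+1) * I.card)) := by
          have : (D+1) * I.card ≤ (2*D+1) * I.card := Nat.mul_le_mul_right _ (by omega)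
          exact Nat.mul_le_mul_left _ (Nat.mul_le_mul_left _ this)
      _ = (2*D+1)^3 * I.card := by ring
  have hcast : ((2*D+1 : ℕ) : ℝ) = 2*(D:ℝ)+1 := by push_cast; ring
  have hkI : k ≤ I.card := by
    rw [hk, Nat.ceil_le, div_le_iff₀ (by positivity)]
    calc (n:ℝ) ≤ (((2*D+1)^3 * I.card : ℕ) : ℝ) := Nat.cast_le.mpr hIcard'
      _ = (I.card:ℝ) * (2*(D:ℝ)+1)^3 := by push_cast; ring
  have hkn : k ≤ n := by
    rw [hk, Nat.ceil_le]
    apply div_le_self (Nat.cast_nonneg n)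
    have h1 : (1:ℝ) ≤ 2*(D:ℝ)+1 := by
      have : (0:ℝ) ≤ (D:ℝ) := Nat.cast_nonneg D
      linarith
    exact one_le_pow₀ h1
  obtain ⟨I', hI'sub, hI'card⟩ := Finset.exists_subset_card_eq hkI
  set C := Finset.univ \ I' with hC
  have hCcard : C.card = n - k := by
    rw [hC, Finset.card_sdiff_of_subset (Finset.subset_univ _), Finset.card_univ, Fintype.card_fin,
      hI'card]
  set M := degList G D hdeg' C with hM
  have hMlen : M.length = n - k := by rw [hM, degList_length, hCcard]
  set L := M ++ I'.toList with hL
  have hLlen : L.length = n := by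
    rw [hL, List.length_append, hMlen, Finset.length_toList, hI'card]
    omega
  have hLnd : L.Nodup := by
    refine List.Nodup.append (degList_nodup _ _) (Finset.nodup_toList _) ?_
    intro a ha hb
    have h1 : a ∈ C := degList_mem hdeg' C a ha
    rw [hC, Finset.mem_sdiff] at h1
    exact h1.2 (Finset.mem_toList.mp hb)
  have hinj : Function.Injective (fun i : Fin n => L.get (Fin.cast hLlen.symm i)) := by
    intro i j hij
    have h1 := List.nodup_iff_injective_get.mp hLnd hij
    exact Fin.cast_injective _ h1
  set e := Equiv.ofBijective _ (Finite.injective_iff_bijective.mp hinj) with he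
  have heapp : ∀ i : Fin n, e i = L.get (Fin.cast hLlen.symm i) := fun i => rfl
  have htail : ∀ i : Fin n, n - k ≤ i.val → e i ∈ I' := by
    intro i hi
    rw [heapp, List.get_eq_getElem]
    have h1 : M.length ≤ (Fin.cast hLlen.symm i).val := by
      rw [hMlen]; exact hi
    rw [List.getElem_append_right h1]
    exact Finset.mem_toList.mp (List.getElem_mem _)
  have hhead : ∀ i : Fin n, ∀ hi : i.val < M.length, e i = M.get ⟨i.val, hi⟩ := by
    intro i hi
    rw [heapp, List.get_eq_getElem, List.get_eq_getElem]
    exact List.getElem_append_left hi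
  have htake : ∀ i j : Fin n, j < i → e j ∈ L.take i.val := by
    intro i j hji
    have hj : j.val < L.length := by rw [hLlen]; exact j.isLt
    have hlt : j.val < (L.take i.val).length := by
      rw [List.length_take]
      exact lt_min (Fin.lt_def.mp hji) hj
    have h1 := List.getElem_mem hlt
    rw [List.getElem_take] at h1
    rw [heapp, List.get_eq_getElem]
    exact h1
  have hdegfact : ∀ i : Fin n, n - k ≤ i.val → (G.neighborSet (e i)).ncard = d := by
    intro i hi
    have hiB : e i ∈ B := hIB (hI'sub (htail i hi))
    rw [hB, Finset.mem_filter] at hiB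
    have hns : G.neighborSet (e i) = ↑(Finset.univ.filter (G.Adj (e i))) := by
      ext w; simp
    rw [hns, Set.ncard_coe_finset, hiB.2]
  refine ⟨d, hd2D, e, ?_, hdegfact, ?_⟩
  · intro i
    have hScard : ({j : Fin n | j < i ∧ G.Adj (e j) (e i)}).ncard
        = (e '' {j : Fin n | j < i ∧ G.Adj (e j) (e i)}).ncard :=
      (Set.ncard_image_of_injective _ e.injective).symm
    by_cases hi : i.val < M.length
    · have hsub : e '' {j : Fin n | j < i ∧ G.Adj (e j) (e i)}
          ⊆ {w | w ∈ M.take i.val ∧ G.Adj (M.get ⟨i.val, hi⟩) w} := by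
        rintro w ⟨j, ⟨hji, hadj⟩, rfl⟩
        constructor
        · have h1 := htake i j hji
          rwa [hL, List.take_append_of_le_length (le_of_lt hi)] at h1
        · rw [← hhead i hi]
          exact hadj.symm
      calc ({j : Fin n | j < i ∧ G.Adj (e j) (e i)}).ncard
          = (e '' {j : Fin n | j < i ∧ G.Adj (e j) (e i)}).ncard := hScard
        _ ≤ ({w | w ∈ M.take i.val ∧ G.Adj (M.get ⟨i.val, hi⟩) w}).ncard :=
            Set.ncard_le_ncard hsub (Set.toFinite _)
        _ ≤ D := degList_deg hdeg' C i.val hi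
        _ ≤ 2*D := by omega
    · push_neg at hi
      rw [hMlen] at hi
      have hsub : e '' {j : Fin n | j < i ∧ G.Adj (e j) (e i)} ⊆ G.neighborSet (e i) := by
        rintro w ⟨j, ⟨hji, hadj⟩, rfl⟩
        exact hadj.symm
      calc ({j : Fin n | j < i ∧ G.Adj (e j) (e i)}).ncard
          = (e '' {j : Fin n | j < i ∧ G.Adj (e j) (e i)}).ncard := hScard
        _ ≤ (G.neighborSet (e i)).ncard := Set.ncard_le_ncard hsub (Set.toFinite _)
        _ = d := hdegfact i hi
        _ ≤ 2*D := hd2D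
  · intro i j hi hj
    exact hIind _ (hI'sub (htail i hi)) _ (hI'sub (htail j hj))
end

section
/- Let Ω be a finite probability space with filtration F_0,...,F_n, let R > 0, and for each i let Y_i be an F_i-measurable nonnegative random variable with Y_i ≤ R. Let μ̃ > 0 and let E be an event such that on E we have Σ_{i=1}^n E[Y_i | F_{i-1}] ≤ μ̃. Then P[E and Σ_{i=1}^n Y_i > 2μ̃] ≤ exp(-μ̃/(4R)). -/
open MeasureTheory

lemma freedman_aux_integrable {Ω : Type*} [Fintype Ω] [m0 : MeasurableSpace Ω]
    (μ : Measure Ω) [IsProbabilityMeasure μ] {f : Ω → ℝ}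
    (hf : AEStronglyMeasurable f μ) : Integrable f μ := by
  have hne : Nonempty Ω := by
    by_contra h
    rw [not_nonempty_iff] at h
    have := measure_univ (μ := μ)
    rw [Set.univ_eq_empty_iff.mpr h] at this
    simp at this
  refine (integrable_const ((Finset.univ.sup' Finset.univ_nonempty fun ω => ‖f ω‖))).mono'
    hf (ae_of_all _ fun ω => Finset.le_sup' (fun ω => ‖f ω‖) (Finset.mem_univ ω))

lemma freedman_aux_exp_le {R y : ℝ} (hR : 0 < R) (h0 : 0 ≤ y) (hy : y ≤ R) :
    Real.exp ((2 * R)⁻¹ * y) ≤ 1 + 3 / (4 * R) * y := by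
  set t := (2 * R)⁻¹ * y with ht
  have ht0 : 0 ≤ t := by positivity
  have ht1 : t ≤ 1 := by
    rw [ht, inv_mul_le_iff₀ (by positivity)]
    nlinarith
  have hb := Real.exp_bound' ht0 ht1 (n := 2) (by norm_num)
  simp [Finset.sum_range_succ, Nat.factorial] at hb
  have ht2 : t ^ 2 ≤ y / (4 * R) := by
    rw [ht, inv_mul_eq_div, div_pow, div_le_div_iff₀ (by positivity) (by positivity)]
    nlinarith [mul_nonneg (mul_nonneg h0 hR.le) (sub_nonneg.mpr hy)]
  have h3 : t + t ^ 2 ≤ 3 / (4 * R) * y := by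
    have he : t = y / (2 * R) := by rw [ht]; ring
    have h4 : y / (2 * R) + y / (4 * R) = 3 / (4 * R) * y := by field_simp; ring
    linarith
  nlinarith [sq_nonneg t]

/-- Freedman-type upper tail bound on a good event: on a finite probability space with a
filtration `F`, if `Y i` is `F i`-measurable with `0 ≤ Y i ≤ R`, and on an event `E` the
sum of conditional expectations `∑_{i=1}^n E[Y i | F (i-1)]` is at most `μ̃ > 0`, then
`P[E and ∑ Y i > 2 μ̃] ≤ exp (-μ̃ / (4R))`. -/
theorem freedman_upper_tail {Ω : Type*} [Fintype Ω] [m0 : MeasurableSpace Ω]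
    (μ : Measure Ω) [IsProbabilityMeasure μ]
    (n : ℕ) (F : Filtration ℕ m0)
    (R : ℝ) (hR : 0 < R)
    (Y : ℕ → Ω → ℝ)
    (hmeas : ∀ i ∈ Finset.Icc 1 n, Measurable[F i] (Y i))
    (hbdd : ∀ i ∈ Finset.Icc 1 n, ∀ ω, 0 ≤ Y i ω ∧ Y i ω ≤ R)
    (μt : ℝ) (hμt : 0 < μt)
    (E : Set Ω)
    (hE : ∀ᵐ ω ∂μ, ω ∈ E → ∑ i ∈ Finset.Icc 1 n, (μ[Y i | F (i - 1)]) ω ≤ μt) :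
    μ (E ∩ {ω | 2 * μt < ∑ i ∈ Finset.Icc 1 n, Y i ω})
      ≤ ENNReal.ofReal (Real.exp (-μt / (4 * R))) := by
  classical
  set lam : ℝ := (2 * R)⁻¹ with hlam
  set a : ℝ := 3 / (4 * R) with ha
  have hlam0 : 0 < lam := by rw [hlam]; positivity
  have ha0 : 0 < a := by rw [ha]; positivity
  set g : ℕ → Ω → ℝ := fun i => μ[Y i | F (i - 1)] with hg
  set M : ℕ → Ω → ℝ :=
    fun k ω => Real.exp (∑ i ∈ Finset.Icc 1 k, (lam * Y i ω - a * g i ω)) with hM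
  have hYm : ∀ i ∈ Finset.Icc 1 n, Measurable (Y i) :=
    fun i hi => (hmeas i hi).mono (F.le i) le_rfl
  have hMsm : ∀ k, k ≤ n → StronglyMeasurable[F k] (M k) := by
    intro k hk
    refine Real.continuous_exp.comp_stronglyMeasurable
      (Finset.stronglyMeasurable_fun_sum _ fun i hi => ?_)
    rw [Finset.mem_Icc] at hi
    have h1 : StronglyMeasurable[F k] (Y i) :=
      ((hmeas i (Finset.mem_Icc.mpr ⟨hi.1, hi.2.trans hk⟩)).mono (F.mono hi.2)
        le_rfl).stronglyMeasurable
    have h2 : StronglyMeasurable[F k] (g i) :=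
      stronglyMeasurable_condExp.mono (F.mono ((Nat.sub_le i 1).trans hi.2))
    exact (h1.const_mul lam).sub (h2.const_mul a)
  have hMi : ∀ k, k ≤ n → Integrable (M k) μ := fun k hk =>
    freedman_aux_integrable μ (((hMsm k hk).mono (F.le k)).aestronglyMeasurable)
  have key : ∀ k, k ≤ n → ∫ ω, M k ω ∂μ ≤ 1 := by
    intro k
    induction k with
    | zero =>
      intro _
      have h0 : M 0 = fun _ => 1 := by funext ω; simp [hM]
      rw [h0]
      simp
    | succ k ih =>
      intro hk1
      have hk : k ≤ n := Nat.le_of_succ_le hk1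
      have hmem : k + 1 ∈ Finset.Icc 1 n :=
        Finset.mem_Icc.mpr ⟨Nat.succ_le_succ (Nat.zero_le k), hk1⟩
      set e : Ω → ℝ := fun ω => Real.exp (lam * Y (k + 1) ω) with he
      set W : Ω → ℝ := fun ω => M k ω * Real.exp (-(a * g (k + 1) ω)) with hW
      have hsplit : M (k + 1) = W * e := by
        funext ω
        simp only [hM, hW, he, Pi.mul_apply]
        rw [Finset.sum_Icc_succ_top (Nat.le_add_left 1 k), Real.exp_add,
          show lam * Y (k + 1) ω - a * g (k + 1) ω
            = -(a * g (k + 1) ω) + lam * Y (k + 1) ω by ring, Real.exp_add]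
        ring
      have hgsm : StronglyMeasurable[F k] (g (k + 1)) := by
        have : StronglyMeasurable[F (k + 1 - 1)] (g (k + 1)) := stronglyMeasurable_condExp
        simpa using this
      have hWsm : StronglyMeasurable[F k] W :=
        (hMsm k hk).mul (Real.continuous_exp.comp_stronglyMeasurable
          ((hgsm.const_mul a).neg))
      have hei : Integrable e μ := freedman_aux_integrable μ
        ((Real.measurable_exp.comp ((hYm (k + 1) hmem).const_mul lam)).aestronglyMeasurable)
      have hWe_i : Integrable (W * e) μ := freedman_aux_integrable μ
        (((hWsm.mono (F.le k)).aestronglyMeasurable).mul hei.aestronglyMeasurable)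
      have hMki : Integrable (M k) μ := hMi k hk
      have hY1 : ∀ ω, 0 ≤ Y (k + 1) ω ∧ Y (k + 1) ω ≤ R := hbdd _ hmem
      have hpt : ∀ ω, e ω ≤ 1 + a * Y (k + 1) ω := fun ω => by
        simpa [he, hlam, ha] using freedman_aux_exp_le hR (hY1 ω).1 (hY1 ω).2
      have hint1 : Integrable (fun ω => 1 + a * Y (k + 1) ω) μ := freedman_aux_integrable μ
        ((measurable_const.add ((hYm (k + 1) hmem).const_mul a)).aestronglyMeasurable)
      have hcm : μ[e | F k] ≤ᵐ[μ] μ[fun ω => 1 + a * Y (k + 1) ω | F k] :=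
        condExp_mono hei hint1 (ae_of_all _ hpt)
      have hca : μ[fun ω => 1 + a * Y (k + 1) ω | F k]
          =ᵐ[μ] fun ω => 1 + a * g (k + 1) ω := by
        have h1 : (fun ω => 1 + a * Y (k + 1) ω)
            = (fun _ => (1 : ℝ)) + a • (Y (k + 1)) := by
          funext ω; simp [smul_eq_mul]
        rw [h1]
        refine (condExp_add (integrable_const 1)
          ((freedman_aux_integrable μ ((hYm (k + 1) hmem).aestronglyMeasurable)).smul a) (F k)).trans ?_
        have h2 := condExp_smul (μ := μ) (m := F k) a (Y (k + 1))
        filter_upwards [h2] with ω hω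
        have h3 : (μ[(fun _ => (1 : ℝ))|F k]) = fun _ => (1 : ℝ) := condExp_const (F.le k) 1
        simp only [Pi.add_apply, h3, hω, Pi.smul_apply, smul_eq_mul]
        congr 1
      have hce : μ[e | F k] ≤ᵐ[μ] fun ω => Real.exp (a * g (k + 1) ω) := by
        filter_upwards [hcm, hca] with ω h1 h2
        have h4 : (μ[e|F k]) ω ≤ 1 + a * g (k + 1) ω := h2 ▸ h1
        linarith [Real.add_one_le_exp (a * g (k + 1) ω)]
      have hpull : μ[M (k + 1) | F k] =ᵐ[μ] W * μ[e | F k] := by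
        rw [hsplit]
        exact condExp_mul_of_stronglyMeasurable_left hWsm hWe_i hei
      have hle : μ[M (k + 1) | F k] ≤ᵐ[μ] M k := by
        filter_upwards [hpull, hce] with ω h1 h2
        have hW0 : 0 ≤ W ω := by
          simp only [hW, hM]
          positivity
        calc (μ[M (k + 1)|F k]) ω = W ω * (μ[e|F k]) ω := h1
          _ ≤ W ω * Real.exp (a * g (k + 1) ω) := mul_le_mul_of_nonneg_left h2 hW0
          _ = M k ω := by
            simp only [hW]
            rw [mul_assoc, ← Real.exp_add]
            simp
      have hM1i : Integrable (M (k + 1)) μ := hsplit ▸ hWe_i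
      calc ∫ ω, M (k + 1) ω ∂μ = ∫ ω, (μ[M (k + 1)|F k]) ω ∂μ :=
            (integral_condExp (F.le k)).symm
        _ ≤ ∫ ω, M k ω ∂μ := integral_mono_ae integrable_condExp hMki hle
        _ ≤ 1 := ih hk
  set c := Real.exp (μt / (4 * R)) with hc
  have hMn_int : Integrable (M n) μ := hMi n le_rfl
  have hsub : ((E ∩ {ω | 2 * μt < ∑ i ∈ Finset.Icc 1 n, Y i ω} : Set Ω))
      ≤ᵐ[μ] ({ω | c ≤ M n ω} : Set Ω) := by
    filter_upwards [hE] with ω hω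
    intro hmem'
    obtain ⟨hE1, hS⟩ := hmem'
    have hT : ∑ i ∈ Finset.Icc 1 n, g i ω ≤ μt := hω hE1
    have hS' : 2 * μt < ∑ i ∈ Finset.Icc 1 n, Y i ω := hS
    show c ≤ M n ω
    rw [hc, hM]
    apply Real.exp_le_exp.mpr
    have hsum : ∑ i ∈ Finset.Icc 1 n, (lam * Y i ω - a * g i ω)
        = lam * (∑ i ∈ Finset.Icc 1 n, Y i ω) - a * (∑ i ∈ Finset.Icc 1 n, g i ω) := by
      rw [Finset.sum_sub_distrib, Finset.mul_sum, Finset.mul_sum]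
    rw [hsum]
    have h1 : lam * (2 * μt) ≤ lam * (∑ i ∈ Finset.Icc 1 n, Y i ω) :=
      mul_le_mul_of_nonneg_left hS'.le hlam0.le
    have h2 : a * (∑ i ∈ Finset.Icc 1 n, g i ω) ≤ a * μt :=
      mul_le_mul_of_nonneg_left hT ha0.le
    have h3 : lam * (2 * μt) - a * μt = μt / (4 * R) := by
      rw [hlam, ha]; field_simp; ring
    linarith
  have hpos : 0 < c := Real.exp_pos _
  have hmar := mul_meas_ge_le_integral_of_nonneg (μ := μ) (f := M n)
    (ae_of_all _ fun ω => (Real.exp_pos _).le) hMn_int c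
  have htoReal : (μ {ω | c ≤ M n ω}).toReal ≤ Real.exp (-μt / (4 * R)) := by
    rw [neg_div, Real.exp_neg, ← hc, inv_eq_one_div]
    exact (le_div_iff₀ hpos).mpr (by rw [mul_comm]; exact hmar.trans (key n le_rfl))
  calc μ (E ∩ {ω | 2 * μt < ∑ i ∈ Finset.Icc 1 n, Y i ω})
      ≤ μ {ω | c ≤ M n ω} := measure_mono_ae hsub
    _ = ENNReal.ofReal ((μ {ω | c ≤ M n ω}).toReal) :=
        (ENNReal.ofReal_toReal (measure_ne_top μ _)).symm
    _ ≤ ENNReal.ofReal (Real.exp (-μt / (4 * R))) := ENNReal.ofReal_le_ofReal htoReal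
end

section
/- Let Ω be a finite probability space with filtration F_0,...,F_n, let R > 0, and for each i let Y_i be an F_i-measurable random variable with 0 ≤ Y_i ≤ R. Suppose on an event E we have Σ_{i=1}^n E[Y_i|F_{i-1}] = μ̃ ± ν̃. Then for every ρ̃ > 0, P[E and Σ_{i=1}^n Y_i ≠ μ̃ ± (ν̃ + ρ̃)] ≤ 2 exp(-ρ̃²/(2R(μ̃ + ν̃ + ρ̃))). -/
open MeasureTheory


section Aux
variable {Ω : Type*} [Fintype Ω] [m0 : MeasurableSpace Ω]

/-- Every a.e.-strongly-measurable real function on a finite space with finite measure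
is integrable. -/
lemma FreedmanAux.integrable_of_fintype (μ : Measure Ω) [IsFiniteMeasure μ] {f : Ω → ℝ}
    (hf : AEStronglyMeasurable f μ) : Integrable f μ := by
  refine (integrable_const (∑ x : Ω, ‖f x‖)).mono' hf ?_
  refine Filter.Eventually.of_forall fun ω => ?_
  have : ‖f ω‖ ≤ ∑ x : Ω, ‖f x‖ :=
    Finset.single_le_sum (f := fun x => ‖f x‖) (fun x _ => norm_nonneg _)
      (Finset.mem_univ ω)
  simpa using this

end Aux

/-- Chord bound: for `0 ≤ y ≤ R`, `exp (l*y) ≤ 1 + (exp (l*R) - 1)/R * y`. -/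
lemma FreedmanAux.exp_chord {R l y : ℝ} (hR : 0 < R) (hy0 : 0 ≤ y) (hyR : y ≤ R) :
    Real.exp (l * y) ≤ 1 + (Real.exp (l * R) - 1) / R * y := by
  have hab : (1 - y / R) + y / R = 1 := by ring
  have ha : 0 ≤ 1 - y / R := by
    have : y / R ≤ 1 := (div_le_one hR).2 hyR
    linarith
  have hb : 0 ≤ y / R := div_nonneg hy0 hR.le
  have h := convexOn_exp.2 (Set.mem_univ (0:ℝ)) (Set.mem_univ (l * R)) ha hb hab
  have h0 : (1 - y / R) • (0:ℝ) + (y / R) • (l * R) = l * y := by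
    simp only [smul_eq_mul, mul_zero, zero_add]; rw [div_mul_eq_mul_div, div_eq_iff hR.ne']; ring
  rw [h0] at h
  have : (1 - y / R) • Real.exp 0 + (y / R) • Real.exp (l * R)
      = 1 + (Real.exp (l * R) - 1) / R * y := by
    rw [Real.exp_zero]; simp only [smul_eq_mul]; ring
  linarith [this ▸ h]

/-- Cubic upper bound for `exp` near 0. -/
lemma FreedmanAux.exp_cubic {x : ℝ} (hx : |x| ≤ 1) :
    Real.exp x ≤ 1 + x + x ^ 2 / 2 + 2 / 9 * |x| ^ 3 := by
  have h := Real.exp_bound hx (n := 3) (by norm_num)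
  have hsum : ∑ m ∈ Finset.range 3, x ^ m / (Nat.factorial m) = 1 + x + x ^ 2 / 2 := by
    simp [Finset.sum_range_succ, Nat.factorial]
  rw [hsum] at h
  have hb : |x| ^ 3 * (((Nat.succ 3 : ℕ) : ℝ) / ((Nat.factorial 3 : ℝ) * ((3:ℕ):ℝ))) = 2 / 9 * |x| ^ 3 := by
    norm_num [Nat.factorial]; ring
  rw [hb] at h
  have := abs_le.1 h
  linarith [this.2]

/-- Exponential supermartingale bound: `E[exp(∑ (l·Y_i - c·E[Y_i|F_{i-1}]))] ≤ 1`
with `c = (exp(l R) - 1)/R`. -/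
lemma FreedmanAux.super {Ω : Type*} [Fintype Ω] [m0 : MeasurableSpace Ω]
    (μ : Measure Ω) [IsProbabilityMeasure μ]
    (F : Filtration ℕ m0) (R l : ℝ) (hR : 0 < R)
    (Y : ℕ → Ω → ℝ) (n : ℕ)
    (hmeas : ∀ i ∈ Finset.Icc 1 n, Measurable[F i] (Y i))
    (hbdd : ∀ i ∈ Finset.Icc 1 n, ∀ ω, 0 ≤ Y i ω ∧ Y i ω ≤ R) :
    ∫ ω, Real.exp (∑ i ∈ Finset.Icc 1 n,
        (l * Y i ω - (Real.exp (l * R) - 1) / R * (μ[Y i | F (i - 1)]) ω)) ∂μ ≤ 1 := by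
  induction n with
  | zero => simp
  | succ n ih =>
    set c : ℝ := (Real.exp (l * R) - 1) / R with hc
    have hsub : ∀ i ∈ Finset.Icc 1 n, i ∈ Finset.Icc 1 (n + 1) := by
      intro i hi
      simp only [Finset.mem_Icc] at hi ⊢
      omega
    have ihn := ih (fun i hi => hmeas i (hsub i hi)) (fun i hi => hbdd i (hsub i hi))
    have hmem : n + 1 ∈ Finset.Icc 1 (n + 1) := by simp
    have hYmeas : Measurable[m0] (Y (n + 1)) := (hmeas _ hmem).mono (F.le _) le_rfl
    -- notation
    set S : Ω → ℝ := fun ω => ∑ i ∈ Finset.Icc 1 n,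
        (l * Y i ω - c * (μ[Y i | F (i - 1)]) ω) with hS
    set q : Ω → ℝ := fun ω => (μ[Y (n + 1) | F n]) ω with hq
    have hq_smeas : StronglyMeasurable[F n] q := stronglyMeasurable_condExp
    have hq_meas : Measurable[m0] q := (hq_smeas.mono (F.le n)).measurable
    -- S is F n - measurable
    have hS_smeas : StronglyMeasurable[F n] S := by
      refine Finset.stronglyMeasurable_fun_sum _ fun i hi => ?_
      have hi' := Finset.mem_Icc.1 hi
      have h1 : StronglyMeasurable[F n] (Y i) :=
        ((hmeas i (hsub i hi)).mono (F.mono (by omega : i ≤ n)) le_rfl).stronglyMeasurable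
      have h2 : StronglyMeasurable[F n] (μ[Y i | F (i - 1)]) :=
        stronglyMeasurable_condExp.mono (F.mono (by omega : i - 1 ≤ n))
      exact ((h1.const_smul l).sub (h2.const_smul c))
    have hS_meas : Measurable[m0] S := (hS_smeas.mono (F.le n)).measurable
    -- integrability helper
    have intble : ∀ f : Ω → ℝ, Measurable[m0] f → Integrable f μ := fun f hf =>
      FreedmanAux.integrable_of_fintype μ hf.aestronglyMeasurable
    -- g and f
    set g : Ω → ℝ := fun ω => Real.exp (S ω - c * q ω) with hg
    set f : Ω → ℝ := fun ω => Real.exp (l * Y (n + 1) ω) with hf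
    have hg_smeas : StronglyMeasurable[F n] g :=
      (Real.continuous_exp.comp_stronglyMeasurable
        (hS_smeas.sub (hq_smeas.const_smul c)))
    have hg_meas : Measurable[m0] g := (hg_smeas.mono (F.le n)).measurable
    have hf_meas : Measurable[m0] f := (Real.measurable_exp.comp (hYmeas.const_mul l))
    have hgf_int : Integrable (g * f) μ := intble _ (hg_meas.mul hf_meas)
    have hf_int : Integrable f μ := intble _ hf_meas
    -- split the exponential
    have hsplit : ∀ ω, Real.exp (∑ i ∈ Finset.Icc 1 (n + 1),
        (l * Y i ω - c * (μ[Y i | F (i - 1)]) ω)) = g ω * f ω := by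
      intro ω
      rw [Finset.sum_Icc_succ_top (by omega : 1 ≤ n + 1)]
      simp only [hg, hf, hS, hq]
      rw [← Real.exp_add]
      congr 1
      simp only [Nat.add_sub_cancel]
      ring
    rw [show (fun ω => Real.exp (∑ i ∈ Finset.Icc 1 (n + 1),
        (l * Y i ω - c * (μ[Y i | F (i - 1)]) ω))) = g * f from funext hsplit]
    -- pull-out property
    have hpull : μ[g * f | F n] =ᵐ[μ] g * μ[f | F n] :=
      condExp_mul_of_stronglyMeasurable_left hg_smeas hgf_int hf_int
    have hstep1 : ∫ ω, (g * f) ω ∂μ = ∫ ω, g ω * (μ[f | F n]) ω ∂μ := by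
      have h := integral_condExp (μ := μ) (F.le n) (f := g * f)
      rw [← h]
      exact integral_congr_ae hpull
    -- conditional chord bound
    have hchord : ∀ᵐ ω ∂μ, (μ[f | F n]) ω ≤ 1 + c * q ω := by
      have hle : f ≤ᵐ[μ] fun ω => 1 + c * Y (n + 1) ω := by
        refine Filter.Eventually.of_forall fun ω => ?_
        exact FreedmanAux.exp_chord hR (hbdd _ hmem ω).1 (hbdd _ hmem ω).2
      have hmono := condExp_mono (m := F n) hf_int
        (intble _ ((hYmeas.const_mul c).const_add 1)) hle
      have hadd : μ[(fun ω => 1 + c * Y (n + 1) ω) | F n]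
          =ᵐ[μ] fun ω => 1 + c * q ω := by
        have h1 : (fun ω => 1 + c * Y (n + 1) ω)
            = (fun _ => (1:ℝ)) + c • (Y (n + 1)) := by
          funext ω; simp [smul_eq_mul]
        rw [h1]
        have h2 := condExp_add (μ := μ) (m := F n) (integrable_const (1:ℝ))
          ((intble _ hYmeas).smul c)
        have h3 := condExp_smul (μ := μ) (m := F n) c (Y (n + 1))
        have h4 := condExp_const (μ := μ) (F.le n) (1:ℝ)
        filter_upwards [h2, h3] with ω e2 e3
        have e4 := congrFun h4 ω
        simp only [Pi.add_apply, Pi.smul_apply, smul_eq_mul] at *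
        rw [e2, e4, e3]
      filter_upwards [hmono, hadd] with ω h1 h2
      calc (μ[f | F n]) ω ≤ _ := h1
      _ = 1 + c * q ω := h2
    -- bound the integral
    have hstep2 : ∫ ω, g ω * (μ[f | F n]) ω ∂μ ≤ ∫ ω, Real.exp (S ω) ∂μ := by
      refine integral_mono_ae
        (intble _ (hg_meas.mul ((stronglyMeasurable_condExp.mono (F.le n)).measurable)))
        (intble _ (Real.measurable_exp.comp hS_meas)) ?_
      filter_upwards [hchord] with ω h1
      have hg_nonneg : 0 ≤ g ω := (Real.exp_pos _).le
      have : g ω * (μ[f | F n]) ω ≤ g ω * (1 + c * q ω) :=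
        mul_le_mul_of_nonneg_left h1 hg_nonneg
      refine this.trans ?_
      have h2 : (1 : ℝ) + c * q ω ≤ Real.exp (c * q ω) := by
        linarith [Real.add_one_le_exp (c * q ω)]
      have h3 : g ω * (1 + c * q ω) ≤ g ω * Real.exp (c * q ω) :=
        mul_le_mul_of_nonneg_left h2 hg_nonneg
      refine h3.trans_eq ?_
      simp only [hg]
      rw [← Real.exp_add]
      congr 1
      ring
    calc ∫ ω, (g * f) ω ∂μ = _ := hstep1
    _ ≤ ∫ ω, Real.exp (S ω) ∂μ := hstep2
    _ ≤ 1 := ihn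

/-- Markov/Chernoff step: if `E[exp G] ≤ 1` and `β ≤ G` a.e. on `S`, then
`μ S ≤ exp (-β)`. -/
lemma FreedmanAux.tail {Ω : Type*} [Fintype Ω] [m0 : MeasurableSpace Ω]
    (μ : Measure Ω) [IsProbabilityMeasure μ]
    {G : Ω → ℝ} (hG : Measurable G)
    (hint : ∫ ω, Real.exp (G ω) ∂μ ≤ 1) {β : ℝ} {S : Set Ω}
    (hS : ∀ᵐ ω ∂μ, ω ∈ S → β ≤ G ω) :
    μ S ≤ ENNReal.ofReal (Real.exp (-β)) := by
  have hmono : μ S ≤ μ {ω | Real.exp β ≤ Real.exp (G ω)} := by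
    apply measure_mono_ae
    filter_upwards [hS] with ω h hωS
    exact Real.exp_le_exp.2 (h hωS)
  have hint' : Integrable (fun ω => Real.exp (G ω)) μ :=
    FreedmanAux.integrable_of_fintype μ (Real.measurable_exp.comp hG).aestronglyMeasurable
  have hmark := mul_meas_ge_le_integral_of_nonneg
    (Filter.Eventually.of_forall fun ω => (Real.exp_pos (G ω)).le) hint' (Real.exp β)
  have hepos := Real.exp_pos β
  have h1 : (μ {ω | Real.exp β ≤ Real.exp (G ω)}).toReal ≤ Real.exp (-β) := by
    rw [Real.exp_neg]
    have h2 := hmark.trans hint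
    rw [measureReal_def] at h2
    nlinarith [mul_le_mul_of_nonneg_left h2 (inv_pos.2 hepos).le,
      mul_inv_cancel₀ (ne_of_gt hepos)]
  refine hmono.trans ?_
  rw [← ENNReal.ofReal_toReal (measure_ne_top μ {ω | Real.exp β ≤ Real.exp (G ω)})]
  exact ENNReal.ofReal_le_ofReal h1


/-- Freedman-type two-sided bound on a good event: on a finite probability space with a
filtration `F`, if `Y i` is `F i`-measurable with `0 ≤ Y i ≤ R`, and on an event `E` the
sum of conditional expectations `∑_{i=1}^n E[Y i | F (i-1)]` equals `μ̃ ± ν̃`, then for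
every `ρ̃ > 0`,
`P[E and ∑ Y i ≠ μ̃ ± (ν̃ + ρ̃)] ≤ 2 exp (-ρ̃² / (2R(μ̃ + ν̃ + ρ̃)))`. -/
theorem freedman_two_sided {Ω : Type*} [Fintype Ω] [m0 : MeasurableSpace Ω]
    (μ : Measure Ω) [IsProbabilityMeasure μ]
    (n : ℕ) (F : Filtration ℕ m0)
    (R : ℝ) (hR : 0 < R)
    (Y : ℕ → Ω → ℝ)
    (hmeas : ∀ i ∈ Finset.Icc 1 n, Measurable[F i] (Y i))
    (hbdd : ∀ i ∈ Finset.Icc 1 n, ∀ ω, 0 ≤ Y i ω ∧ Y i ω ≤ R)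
    (μt νt : ℝ) (hν : 0 ≤ νt)
    (E : Set Ω)
    (hE : ∀ᵐ ω ∂μ, ω ∈ E →
      |(∑ i ∈ Finset.Icc 1 n, (μ[Y i | F (i - 1)]) ω) - μt| ≤ νt) :
    ∀ ρt : ℝ, 0 < ρt →
      μ (E ∩ {ω | νt + ρt < |(∑ i ∈ Finset.Icc 1 n, Y i ω) - μt|})
        ≤ ENNReal.ofReal (2 * Real.exp (-ρt ^ 2 / (2 * R * (μt + νt + ρt)))) := by
  intro ρt hρ
  have hcond_meas : Measurable[m0] (fun ω => ∑ i ∈ Finset.Icc 1 n, (μ[Y i | F (i - 1)]) ω) :=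
    Finset.measurable_sum _ fun i _ =>
      (stronglyMeasurable_condExp.mono (F.le (i - 1))).measurable
  by_cases ha : 0 ≤ μt + νt
  swap
  · -- degenerate case: `E` is null
    have hA0 : ∀ᵐ ω ∂μ, 0 ≤ ∑ i ∈ Finset.Icc 1 n, (μ[Y i | F (i - 1)]) ω := by
      have h : ∀ i ∈ Finset.Icc 1 n, ∀ᵐ ω ∂μ, 0 ≤ (μ[Y i | F (i - 1)]) ω := fun i hi =>
        condExp_nonneg (Filter.Eventually.of_forall fun ω => (hbdd i hi ω).1)
      have h2 : ∀ᵐ ω ∂μ, ∀ i ∈ Finset.Icc 1 n, 0 ≤ (μ[Y i | F (i - 1)]) ω :=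
        (Filter.eventually_all_finset _).2 h
      filter_upwards [h2] with ω hω
      exact Finset.sum_nonneg hω
    have hEnull : μ E = 0 := by
      rw [measure_eq_zero_iff_ae_notMem]
      filter_upwards [hE, hA0] with ω h1 h2
      intro hωE
      have h3 := (abs_le.1 (h1 hωE)).2
      linarith
    refine le_trans (measure_mono Set.inter_subset_left) ?_
    rw [hEnull]
    exact zero_le'
  · -- main case
    obtain ⟨a, hadef⟩ : ∃ y : ℝ, y = μt + νt := ⟨_, rfl⟩
    have ha' : 0 ≤ a := hadef ▸ ha
    have hapos : 0 < a + ρt := by rw [hadef]; linarith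
    obtain ⟨x, hxdef⟩ : ∃ y : ℝ, y = ρt / (a + ρt) := ⟨_, rfl⟩
    have hx0 : 0 < x := hxdef ▸ div_pos hρ hapos
    have hx1 : x ≤ 1 := by rw [hxdef, div_le_one hapos]; linarith
    have hxa : x * (a + ρt) = ρt := by rw [hxdef]; field_simp
    have hax : a * x ≤ ρt := by nlinarith [hxa, mul_nonneg hx0.le hρ.le]
    -- key analytic estimates
    have hcub1 := FreedmanAux.exp_cubic (x := x) (by rwa [abs_of_pos hx0])
    rw [abs_of_pos hx0] at hcub1
    have hcub2 := FreedmanAux.exp_cubic (x := -x) (by rwa [abs_neg, abs_of_pos hx0])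
    rw [abs_neg, abs_of_pos hx0] at hcub2
    have hcub2' : Real.exp (-x) ≤ 1 - x + x ^ 2 / 2 + 2 / 9 * x ^ 3 := by
      have hsq : (-x) ^ 2 = x ^ 2 := by ring
      rw [hsq] at hcub2
      linarith
    have hxρ : x * ρt = x ^ 2 * (a + ρt) := by linear_combination (-x) * hxa
    have key1 : a * (Real.exp x - 1 - x) ≤ x * ρt / 2 := by
      have h2' : a * (Real.exp x - 1 - x) ≤ a * (x ^ 2 / 2 + 2 / 9 * x ^ 3) :=
        mul_le_mul_of_nonneg_left (by linarith) ha'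
      have h3' : a * x * x ^ 2 ≤ ρt * x ^ 2 := mul_le_mul_of_nonneg_right hax (sq_nonneg x)
      nlinarith [mul_nonneg hρ.le (sq_nonneg x)]
    have key2 : a * (Real.exp (-x) - 1 + x) ≤ x * ρt / 2 := by
      have h2' : a * (Real.exp (-x) - 1 + x) ≤ a * (x ^ 2 / 2 + 2 / 9 * x ^ 3) :=
        mul_le_mul_of_nonneg_left (by linarith) ha'
      have h3' : a * x * x ^ 2 ≤ ρt * x ^ 2 := mul_le_mul_of_nonneg_right hax (sq_nonneg x)
      nlinarith [mul_nonneg hρ.le (sq_nonneg x)]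
    obtain ⟨β, hβdef⟩ : ∃ y : ℝ, y = ρt ^ 2 / (2 * R * (a + ρt)) := ⟨_, rfl⟩
    have hβx : β = x * ρt / 2 / R := by
      rw [hβdef, hxdef]
      field_simp
    -- the two exponents
    obtain ⟨lam1, hlam1⟩ : ∃ y : ℝ, y = x / R := ⟨_, rfl⟩
    obtain ⟨lam2, hlam2⟩ : ∃ y : ℝ, y = -x / R := ⟨_, rfl⟩
    have hl1R : lam1 * R = x := by rw [hlam1]; field_simp
    have hl2R : lam2 * R = -x := by rw [hlam2]; field_simp
    obtain ⟨c1, hc1⟩ : ∃ y : ℝ, y = (Real.exp (lam1 * R) - 1) / R := ⟨_, rfl⟩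
    obtain ⟨c2, hc2⟩ : ∃ y : ℝ, y = (Real.exp (lam2 * R) - 1) / R := ⟨_, rfl⟩
    have hc1x : c1 = (Real.exp x - 1) / R := by rw [hc1, hl1R]
    have hc2x : c2 = (Real.exp (-x) - 1) / R := by rw [hc2, hl2R]
    -- supermartingale bounds
    have hsup1 := FreedmanAux.super μ F R lam1 hR Y n hmeas hbdd
    have hsup2 := FreedmanAux.super μ F R lam2 hR Y n hmeas hbdd
    rw [← hc1] at hsup1
    rw [← hc2] at hsup2
    -- measurable G's
    have hGmeas : ∀ l c : ℝ, Measurable[m0] (fun ω => ∑ i ∈ Finset.Icc 1 n,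
        (l * Y i ω - c * (μ[Y i | F (i - 1)]) ω)) := by
      intro l c
      refine Finset.measurable_sum _ fun i hi => ?_
      exact (((hmeas i hi).mono (F.le i) le_rfl).const_mul l).sub
        (((stronglyMeasurable_condExp.mono (F.le (i - 1))).measurable).const_mul c)
    have hGeq : ∀ (l c : ℝ) (ω : Ω), (∑ i ∈ Finset.Icc 1 n,
        (l * Y i ω - c * (μ[Y i | F (i - 1)]) ω))
        = l * (∑ i ∈ Finset.Icc 1 n, Y i ω)
          - c * (∑ i ∈ Finset.Icc 1 n, (μ[Y i | F (i - 1)]) ω) := by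
      intro l c ω
      rw [Finset.sum_sub_distrib, ← Finset.mul_sum, ← Finset.mul_sum]
    -- upper tail
    have htail1 : μ (E ∩ {ω | νt + ρt < (∑ i ∈ Finset.Icc 1 n, Y i ω) - μt})
        ≤ ENNReal.ofReal (Real.exp (-β)) := by
      refine FreedmanAux.tail μ (hGmeas lam1 c1) hsup1 ?_
      filter_upwards [hE] with ω hEω
      rintro ⟨h1, h2⟩
      simp only [Set.mem_setOf_eq] at h2
      have hAb := abs_le.1 (hEω h1)
      obtain ⟨Aω, hAω⟩ : ∃ y : ℝ, y = ∑ i ∈ Finset.Icc 1 n, (μ[Y i | F (i - 1)]) ω :=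
        ⟨_, rfl⟩
      obtain ⟨Xω, hXω⟩ : ∃ y : ℝ, y = ∑ i ∈ Finset.Icc 1 n, Y i ω := ⟨_, rfl⟩
      rw [hGeq, ← hAω, ← hXω]
      rw [← hAω] at hAb
      rw [← hXω] at h2
      have hAa : Aω ≤ a := by rw [hadef]; linarith [hAb.2]
      have hXA : ρt < Xω - Aω := by linarith [hAb.2]
      have hexnn : 0 ≤ Real.exp x - 1 - x := by linarith [Real.add_one_le_exp x]
      have e1 : lam1 * Xω - c1 * Aω
          = (x * (Xω - Aω) - (Real.exp x - 1 - x) * Aω) / R := by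
        rw [hc1x, hlam1]; field_simp; ring
      rw [e1, hβx]
      rw [div_le_div_iff_of_pos_right hR]
      linarith [key1, mul_le_mul_of_nonneg_left hAa hexnn,
        mul_le_mul_of_nonneg_left hXA.le hx0.le]
    -- lower tail
    have htail2 : μ (E ∩ {ω | (∑ i ∈ Finset.Icc 1 n, Y i ω) - μt < -(νt + ρt)})
        ≤ ENNReal.ofReal (Real.exp (-β)) := by
      refine FreedmanAux.tail μ (hGmeas lam2 c2) hsup2 ?_
      filter_upwards [hE] with ω hEω
      rintro ⟨h1, h2⟩
      simp only [Set.mem_setOf_eq] at h2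
      have hAb := abs_le.1 (hEω h1)
      obtain ⟨Aω, hAω⟩ : ∃ y : ℝ, y = ∑ i ∈ Finset.Icc 1 n, (μ[Y i | F (i - 1)]) ω :=
        ⟨_, rfl⟩
      obtain ⟨Xω, hXω⟩ : ∃ y : ℝ, y = ∑ i ∈ Finset.Icc 1 n, Y i ω := ⟨_, rfl⟩
      rw [hGeq, ← hAω, ← hXω]
      rw [← hAω] at hAb
      rw [← hXω] at h2
      have hAa : Aω ≤ a := by rw [hadef]; linarith [hAb.2]
      have hAX : ρt < Aω - Xω := by linarith [hAb.1]
      have hexnn : 0 ≤ Real.exp (-x) - 1 + x := by linarith [Real.add_one_le_exp (-x)]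
      have e1 : lam2 * Xω - c2 * Aω
          = (x * (Aω - Xω) - (Real.exp (-x) - 1 + x) * Aω) / R := by
        rw [hc2x, hlam2]; field_simp; ring
      rw [e1, hβx]
      rw [div_le_div_iff_of_pos_right hR]
      linarith [key2, mul_le_mul_of_nonneg_left hAa hexnn,
        mul_le_mul_of_nonneg_left hAX.le hx0.le]
    -- combine the two tails
    have hsplit : E ∩ {ω | νt + ρt < |(∑ i ∈ Finset.Icc 1 n, Y i ω) - μt|}
        ⊆ (E ∩ {ω | νt + ρt < (∑ i ∈ Finset.Icc 1 n, Y i ω) - μt})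
          ∪ (E ∩ {ω | (∑ i ∈ Finset.Icc 1 n, Y i ω) - μt < -(νt + ρt)}) := by
      rintro ω ⟨h1, h2⟩
      simp only [Set.mem_setOf_eq] at h2
      rcases lt_abs.1 h2 with h | h
      · exact Or.inl ⟨h1, h⟩
      · exact Or.inr ⟨h1, by simp only [Set.mem_setOf_eq]; linarith⟩
    calc μ (E ∩ {ω | νt + ρt < |(∑ i ∈ Finset.Icc 1 n, Y i ω) - μt|})
        ≤ μ ((E ∩ {ω | νt + ρt < (∑ i ∈ Finset.Icc 1 n, Y i ω) - μt})
          ∪ (E ∩ {ω | (∑ i ∈ Finset.Icc 1 n, Y i ω) - μt < -(νt + ρt)})) :=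
          measure_mono hsplit
      _ ≤ μ (E ∩ {ω | νt + ρt < (∑ i ∈ Finset.Icc 1 n, Y i ω) - μt})
          + μ (E ∩ {ω | (∑ i ∈ Finset.Icc 1 n, Y i ω) - μt < -(νt + ρt)}) :=
          measure_union_le _ _
      _ ≤ ENNReal.ofReal (Real.exp (-β)) + ENNReal.ofReal (Real.exp (-β)) :=
          add_le_add htail1 htail2
      _ = ENNReal.ofReal (2 * Real.exp (-β)) := by
          rw [← ENNReal.ofReal_add (Real.exp_pos _).le (Real.exp_pos _).le]
          ring_nf
      _ = ENNReal.ofReal (2 * Real.exp (-ρt ^ 2 / (2 * R * (μt + νt + ρt)))) := by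
          rw [hβdef, hadef, neg_div]
end
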